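/- Let V be a finite vocabulary containing a mask token m and a clean token x0 ≠ m, let a ∈ (0,1), and let π : V → [0,1] be a probability vector with π(m) = 0 and π(x0) > 0. Let q be the probability distribution on V assigning mass a to x0 and 1 − a to m, and let p be the probability distribution assigning mass a·π(e) to each e ≠ m and mass 1 − a to m. Then the Kullback–Leibler divergence satisfies KL(q ‖ p) = −a·log π(x0). In particular, with a = 1 − s^w/t^w (for 0 < s < t ≤ 1 and real w ≥ 1), the per-token diffusion KL term of the bond-dependent masked diffusion model equals −(1 − s^w/t^w)·log π(x0). -/
import Mathlib


/-- Per-token diffusion KL term of the bond-dependent masked diffusion model: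
if `q` puts mass `a` on the clean token `x0` and `1 - a` on the mask `m`, and
`p` puts mass `a·π(e)` on each token `e ≠ m` and `1 - a` on `m`, where `π` is a
probability vector with `π(m) = 0` and `π(x0) > 0`, then
`KL(q ‖ p) = ∑ e, q(e)·log(q(e)/p(e)) = −a·log π(x0)`. In particular, for
`a = 1 - s^w/t^w`, the KL term equals `−(1 − s^w/t^w)·log π(x0)`. -/
theorem stmt_4 {V : Type*} [Fintype V] [DecidableEq V] (x0 m : V) (hxm : x0 ≠ m)
    (a : ℝ) (ha0 : 0 < a) (ha1 : a < 1)
    (π : V → ℝ) (hπ0 : ∀ e, 0 ≤ π e) (hπ1 : ∀ e, π e ≤ 1)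
    (hπm : π m = 0) (hπx0 : 0 < π x0) (hπsum : ∑ e, π e = 1)
    (q : V → ℝ)
    (hq : ∀ e, q e = if e = x0 then a else if e = m then 1 - a else 0)
    (p : V → ℝ)
    (hp : ∀ e, e ≠ m → p e = a * π e) (hpm : p m = 1 - a) :
    (∑ e, q e * Real.log (q e / p e)) = -a * Real.log (π x0) ∧
    (∀ w s t : ℝ, 1 ≤ w → 0 < s → s < t → t ≤ 1 → a = 1 - s ^ w / t ^ w →
      (∑ e, q e * Real.log (q e / p e)) =
        -(1 - s ^ w / t ^ w) * Real.log (π x0)) := by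
  have hmain : (∑ e, q e * Real.log (q e / p e)) = -a * Real.log (π x0) := by
    have hsum : (∑ e, q e * Real.log (q e / p e)) =
        q x0 * Real.log (q x0 / p x0) + q m * Real.log (q m / p m) := by
      rw [← Finset.sum_subset (Finset.subset_univ ({x0, m} : Finset V))
        (fun c _ hc => by
          simp only [Finset.mem_insert, Finset.mem_singleton, not_or] at hc
          rw [hq c, if_neg hc.1, if_neg hc.2, zero_mul]),
        Finset.sum_pair hxm]
    rw [hsum, hq x0, if_pos rfl, hq m, if_neg (Ne.symm hxm), if_pos rfl,
      hpm, hp x0 hxm, div_self (by linarith), Real.log_one, mul_zero, add_zero]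
    rw [div_mul_eq_div_div, div_self (ne_of_gt ha0), Real.log_div one_ne_zero (ne_of_gt hπx0),
      Real.log_one]
    ring
  refine ⟨hmain, fun w s t hw hs hst ht1 ha => ?_⟩
  rw [hmain, ha]
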